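/- Let γ, σ² : [0,1] → ℝ be continuous with σ²(u) > 0 for all u ∈ [0,1] (condition (UE)), let Γ(u) := ∫₀^u γ(v) dv, g := ∫₀¹ γ(v) dv, assume (E1): Γ(u) − g·u > 0 for all u ∈ (0,1), and let Ψ(u) := ∫_{1/2}^u σ²(v)/(2(Γ(v) − g·v)) dv. If γ(1) < g, then, with p_c := 2(g − γ(1))/σ²(1) > 0, one has Ψ(u) ∼ −(1/p_c)·log(1−u) as u → 1⁻; that is, lim_{u→1⁻} Ψ(u)/(−log(1−u)) = 1/p_c. -/

import Mathlib

open MeasureTheory Set Filter Topology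

/-- `Γ(u) = ∫₀^u γ(v) dv`. -/
noncomputable def Gam (γ : ℝ → ℝ) (u : ℝ) : ℝ := ∫ v in (0:ℝ)..u, γ v

/-- market mean growth rate `g = ∫₀¹ γ(v) dv`. -/
noncomputable def mg (γ : ℝ → ℝ) : ℝ := ∫ v in (0:ℝ)..1, γ v

/-- `Ψ(u) = ∫_{1/2}^u σ²(v) / (2 (Γ(v) - g v)) dv`. -/
noncomputable def Psi (γ σ2 : ℝ → ℝ) (u : ℝ) : ℝ :=
  ∫ v in (1/2:ℝ)..u, σ2 v / (2 * (Gam γ v - mg γ * v))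

/-- critical diversity index `p_c = 2 (g - γ(1)) / σ²(1)`. -/
noncomputable def pcrit (γ σ2 : ℝ → ℝ) : ℝ := 2 * (mg γ - γ 1) / σ2 1

/-- critical index `q_c = 2 (γ(0) - g) / σ²(0)`. -/
noncomputable def qcrit (γ σ2 : ℝ → ℝ) : ℝ := 2 * (γ 0 - mg γ) / σ2 0

lemma aux_tendsto (h : ℝ → ℝ) (L : ℝ) (hL : 0 < L)
    (hc : ContinuousOn h (Set.Ico (1/2:ℝ) 1))
    (hlim : Filter.Tendsto (fun v => h v * (1 - v)) (nhdsWithin 1 (Set.Iio 1)) (nhds L)) :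
    Filter.Tendsto (fun u => (∫ v in (1/2:ℝ)..u, h v) / (-Real.log (1 - u)))
      (nhdsWithin 1 (Set.Iio 1)) (nhds L) := by
  -- D tends to atTop
  have h1u : Tendsto (fun u : ℝ => 1 - u) (𝓝[<] (1:ℝ)) (𝓝[>] (0:ℝ)) := by
    apply tendsto_nhdsWithin_of_tendsto_nhds_of_eventually_within
    · have : Tendsto (fun u : ℝ => 1 - u) (𝓝 (1:ℝ)) (𝓝 (0:ℝ)) := by
        have := (continuous_sub_left (1:ℝ)).tendsto 1
        simpa using this
      exact this.mono_left nhdsWithin_le_nhds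
    · filter_upwards [self_mem_nhdsWithin] with u hu
      simp only [mem_Iio] at hu
      exact mem_Ioi.mpr (by linarith)
  have hD : Tendsto (fun u : ℝ => -Real.log (1 - u)) (𝓝[<] (1:ℝ)) atTop :=
    tendsto_neg_atBot_atTop.comp (Real.tendsto_log_nhdsGT_zero.comp h1u)
  rw [Metric.tendsto_nhds]
  intro ε hε
  set ε' := ε / 2 with hε'def
  have hε' : 0 < ε' := by positivity
  -- get a
  have hev : {v : ℝ | |h v * (1 - v) - L| < ε'} ∈ 𝓝[<] (1:ℝ) := by
    have := Metric.tendsto_nhds.mp hlim ε' hε'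
    simp only [Real.dist_eq] at this; exact this
  obtain ⟨l, hl, hsub⟩ := mem_nhdsLT_iff_exists_Ioo_subset.mp hev
  simp only [mem_Iio] at hl
  set a := max (3/4 : ℝ) ((l+1)/2) with hadef
  have ha1 : a < 1 := max_lt (by norm_num) (by linarith)
  have ha2 : (1/2:ℝ) < a := lt_of_lt_of_le (by norm_num) (le_max_left _ _)
  have hal : l < a := lt_of_lt_of_le (by linarith) (le_max_right _ _)
  have haux : ∀ v, a ≤ v → v < 1 → |h v * (1 - v) - L| < ε' := fun v hv hv1 =>
    hsub ⟨lt_of_lt_of_le hal hv, hv1⟩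
  -- integrability
  have hint : ∀ b c : ℝ, 1/2 ≤ b → b ≤ c → c < 1 → IntervalIntegrable h volume b c := by
    intro b c hb hbc hcc
    apply ContinuousOn.intervalIntegrable
    apply hc.mono
    rw [uIcc_of_le hbc]
    exact fun x hx => ⟨le_trans hb hx.1, lt_of_le_of_lt hx.2 hcc⟩
  set Da := -Real.log (1 - a) with hDadef
  have hDa : 0 < Da := by
    have : Real.log (1 - a) < 0 := Real.log_neg (by linarith) (by linarith)
    simp only [hDadef]; linarith
  set Fa := ∫ v in (1/2:ℝ)..a, h v with hFadef
  set C := |Fa| + (L + ε') * Da with hCdef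
  have hC0 : 0 ≤ C := add_nonneg (abs_nonneg _) (mul_nonneg (by linarith) hDa.le)
  have hev1 : Ioo a (1:ℝ) ∈ 𝓝[<] (1:ℝ) := Ioo_mem_nhdsLT_of_mem ⟨ha1, le_refl 1⟩
  filter_upwards [hev1, hD.eventually_gt_atTop (max (C/ε') 1)] with u hu hDu
  obtain ⟨hau, hu1⟩ := hu
  set D := -Real.log (1 - u) with hDdef
  have hDpos : (0:ℝ) < D := lt_trans (lt_of_lt_of_le zero_lt_one (le_max_right _ _)) hDu
  have hCD : C < ε' * D := by
    have h1 : C / ε' < D := lt_of_le_of_lt (le_max_left _ _) hDu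
    calc C = ε' * (C / ε') := by field_simp
    _ < ε' * D := by exact (mul_lt_mul_iff_right₀ hε').mpr h1
  -- split
  have hsplit : (∫ v in (1/2:ℝ)..u, h v) = Fa + ∫ v in a..u, h v :=
    (intervalIntegral.integral_add_adjacent_intervals
      (hint (1/2) a (le_refl _) ha2.le ha1) (hint a u (by linarith) hau.le hu1)).symm
  -- integral of c/(1-v)
  have hcint : ∀ c : ℝ, (∫ v in a..u, c / (1 - v)) = c * (D - Da) := by
    intro c
    have hderiv : ∀ v ∈ uIcc a u, HasDerivAt (fun v => -(c * Real.log (1-v))) (c / (1-v)) v := by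
      intro v hv
      rw [uIcc_of_le hau.le] at hv
      have h1v : (1:ℝ) - v ≠ 0 := by
        have : v < 1 := lt_of_le_of_lt hv.2 hu1
        intro hc0; linarith [sub_eq_zero.mp hc0]
      have hlog : HasDerivAt (fun v : ℝ => Real.log (1 - v)) (1/(1-v) * (-1)) v := by
        have hsub : HasDerivAt (fun v : ℝ => 1 - v) (-1) v := (hasDerivAt_id v).const_sub 1
        have := (Real.hasDerivAt_log h1v).comp v hsub
        simpa [one_div, Function.comp_def] using this
      have := (hlog.const_mul c).neg
      exact this.congr_deriv (by ring)
    have hintg : IntervalIntegrable (fun v => c / (1 - v)) volume a u := by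
      apply ContinuousOn.intervalIntegrable
      apply ContinuousOn.div continuousOn_const
        ((continuous_sub_left (1:ℝ)).continuousOn)
      intro v hv
      rw [uIcc_of_le hau.le] at hv
      have hv1 : v < 1 := lt_of_le_of_lt hv.2 hu1
      exact ne_of_gt (by linarith : (0:ℝ) < 1 - v)
    rw [intervalIntegral.integral_eq_sub_of_hasDerivAt hderiv hintg]
    simp only [hDdef, hDadef]; ring
  -- bounds on the integral over [a,u]
  have hIle : (∫ v in a..u, h v) ≤ (L + ε') * (D - Da) := by
    rw [← hcint (L + ε')]
    apply intervalIntegral.integral_mono_on hau.le (hint a u (by linarith) hau.le hu1)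
    · apply ContinuousOn.intervalIntegrable
      apply ContinuousOn.div continuousOn_const
        ((continuous_sub_left (1:ℝ)).continuousOn)
      intro v hv
      rw [uIcc_of_le hau.le] at hv
      have hv1 : v < 1 := lt_of_le_of_lt hv.2 hu1
      exact ne_of_gt (by linarith : (0:ℝ) < 1 - v)
    · intro v hv
      have hv1 : v < 1 := lt_of_le_of_lt hv.2 hu1
      have h1v : (0:ℝ) < 1 - v := by linarith
      rw [le_div_iff₀ h1v]
      have := haux v hv.1 hv1
      rw [abs_sub_lt_iff] at this
      linarith [this.1]
  have hIge : (L - ε') * (D - Da) ≤ (∫ v in a..u, h v) := by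
    rw [← hcint (L - ε')]
    apply intervalIntegral.integral_mono_on hau.le _ (hint a u (by linarith) hau.le hu1)
    · intro v hv
      have hv1 : v < 1 := lt_of_le_of_lt hv.2 hu1
      have h1v : (0:ℝ) < 1 - v := by linarith
      rw [div_le_iff₀ h1v]
      have := haux v hv.1 hv1
      rw [abs_sub_lt_iff] at this
      linarith [this.2]
    · apply ContinuousOn.intervalIntegrable
      apply ContinuousOn.div continuousOn_const
        ((continuous_sub_left (1:ℝ)).continuousOn)
      intro v hv
      rw [uIcc_of_le hau.le] at hv
      have hv1 : v < 1 := lt_of_le_of_lt hv.2 hu1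
      exact ne_of_gt (by linarith : (0:ℝ) < 1 - v)
  -- final estimate
  rw [Real.dist_eq, abs_lt]
  have hFaC : Fa ≤ |Fa| := le_abs_self Fa
  have hFaC' : -|Fa| ≤ Fa := neg_abs_le Fa
  have hnn : 0 ≤ (L + ε') * Da := mul_nonneg (by linarith) hDa.le
  have hmono : (L - ε') * Da ≤ (L + ε') * Da := by nlinarith [hDa.le]
  constructor
  · have hkey : (L - ε) * D < Fa + ∫ v in a..u, h v := by
      have h3 : -C ≤ Fa - (L - ε') * Da := by simp only [hCdef]; linarith
      calc (L - ε) * D = (L - ε') * D - ε' * D := by rw [hε'def]; ring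
        _ < (L - ε') * D - C := by linarith
        _ ≤ (L - ε') * D + (Fa - (L - ε') * Da) := by linarith
        _ = Fa + (L - ε') * (D - Da) := by ring
        _ ≤ Fa + ∫ v in a..u, h v := by linarith
    rw [← hsplit] at hkey
    have := (lt_div_iff₀ hDpos).mpr hkey
    linarith
  · have hkey : Fa + (∫ v in a..u, h v) < (L + ε) * D := by
      have h3 : Fa - (L + ε') * Da ≤ C := by simp only [hCdef]; linarith
      calc Fa + (∫ v in a..u, h v) ≤ Fa + (L + ε') * (D - Da) := by linarith
        _ = (Fa - (L + ε') * Da) + (L + ε') * D := by ring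
        _ ≤ C + (L + ε') * D := by linarith
        _ < ε' * D + (L + ε') * D := by linarith
        _ = (L + ε) * D := by rw [hε'def]; ring
    rw [← hsplit] at hkey
    have := (div_lt_iff₀ hDpos).mpr hkey
    linarith

/-- under (UE) and (E1), if γ(1) < g then p_c > 0 and
Ψ(u) ~ -(1/p_c) log(1-u) as u → 1⁻, i.e. Ψ(u)/(-log(1-u)) → 1/p_c. -/
theorem stmt5 (γ σ2 : ℝ → ℝ) (hγc : ContinuousOn γ (Set.Icc 0 1))
    (hσc : ContinuousOn σ2 (Set.Icc 0 1)) (hUE : ∀ u ∈ Set.Icc (0:ℝ) 1, 0 < σ2 u)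
    (hE1 : ∀ u ∈ Set.Ioo (0:ℝ) 1, 0 < Gam γ u - mg γ * u)
    (h1 : γ 1 < mg γ) :
    0 < pcrit γ σ2 ∧
      Filter.Tendsto (fun u => Psi γ σ2 u / (-Real.log (1 - u)))
        (nhdsWithin 1 (Set.Iio 1)) (nhds (1 / pcrit γ σ2)) := by
  have hσ1 : 0 < σ2 1 := hUE 1 ⟨zero_le_one, le_refl 1⟩
  have hg : 0 < mg γ - γ 1 := sub_pos.mpr h1
  have hpc : 0 < pcrit γ σ2 := by unfold pcrit; positivity
  refine ⟨hpc, ?_⟩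
  have hLval : 1 / pcrit γ σ2 = σ2 1 / (2 * (mg γ - γ 1)) := by
    unfold pcrit; rw [one_div_div]
  -- continuity of Gam
  have hγint : IntervalIntegrable γ volume 0 1 := by
    apply ContinuousOn.intervalIntegrable
    rwa [uIcc_of_le zero_le_one]
  have hGc : ContinuousOn (Gam γ) (Icc 0 1) := by
    have := intervalIntegral.continuousOn_primitive_interval
      (f := γ) (μ := volume) (a := 0) (b := 1) ?_
    · rwa [uIcc_of_le zero_le_one] at this
    · rw [uIcc_of_le zero_le_one]
      exact hγc.integrableOn_Icc
  set P := fun v : ℝ => Gam γ v - mg γ * v with hPdef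
  have hPc : ContinuousOn P (Icc 0 1) :=
    hGc.sub ((continuous_const.mul continuous_id).continuousOn)
  have hP1 : P 1 = 0 := by
    simp only [hPdef, mul_one]
    have : Gam γ 1 = mg γ := rfl
    rw [this, sub_self]
  -- derivative of Gam at 1 from the left
  have hIccmem : Icc (0:ℝ) 1 ∈ 𝓝[Iic 1] (1:ℝ) :=
    mem_nhdsWithin.mpr ⟨Ioi 0, isOpen_Ioi, by norm_num, fun x hx => ⟨le_of_lt hx.1, hx.2⟩⟩
  have hmeas : StronglyMeasurableAtFilter γ (𝓝[Iic 1] (1:ℝ)) volume :=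
    ⟨Icc 0 1, hIccmem, hγc.aestronglyMeasurable measurableSet_Icc⟩
  have hγcw : ContinuousWithinAt γ (Iic 1) 1 := by
    have h := hγc 1 ⟨zero_le_one, le_refl 1⟩
    unfold ContinuousWithinAt at h ⊢
    rwa [← nhdsWithin_Icc_eq_nhdsLE zero_lt_one]
  have hd1 : HasDerivWithinAt (Gam γ) (γ 1) (Iic 1) 1 :=
    intervalIntegral.integral_hasDerivWithinAt_right hγint hmeas hγcw
  have hdP : HasDerivWithinAt P (γ 1 - mg γ) (Iio 1) 1 := by
    have hmul : HasDerivAt (fun v : ℝ => mg γ * v) (mg γ) 1 := by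
      simpa using (hasDerivAt_id (1:ℝ)).const_mul (mg γ)
    exact (hd1.mono Iio_subset_Iic_self).sub (hmul.hasDerivWithinAt.mono Iio_subset_Iic_self)
  have hslope : Tendsto (fun v => P v / (1 - v)) (𝓝[<] (1:ℝ)) (𝓝 (mg γ - γ 1)) := by
    rw [hasDerivWithinAt_iff_tendsto_slope' (notMem_Iio.mpr (le_refl 1))] at hdP
    have hneg := hdP.neg
    rw [show -(γ 1 - mg γ) = mg γ - γ 1 by ring] at hneg
    apply hneg.congr
    intro v
    rw [slope_def_field, hP1]
    rw [show P v - 0 = P v by ring]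
    rw [← neg_div_neg_eq]
    ring_nf
  -- limit of σ2
  have hσlim : Tendsto σ2 (𝓝[<] (1:ℝ)) (𝓝 (σ2 1)) := by
    have h := hσc 1 ⟨zero_le_one, le_refl 1⟩
    have heq : 𝓝[<] (1:ℝ) = 𝓝[Ico 0 1] (1:ℝ) := (nhdsWithin_Ico_eq_nhdsLT zero_lt_one).symm
    rw [heq]
    exact h.mono_left (nhdsWithin_mono 1 Ico_subset_Icc_self)
  -- the main limit
  have hlim : Tendsto (fun v => (σ2 v / (2 * P v)) * (1 - v)) (𝓝[<] (1:ℝ))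
      (𝓝 (σ2 1 / (2 * (mg γ - γ 1)))) := by
    have hq : Tendsto (fun v => σ2 v / (2 * (P v / (1 - v)))) (𝓝[<] (1:ℝ))
        (𝓝 (σ2 1 / (2 * (mg γ - γ 1)))) := by
      apply hσlim.div (hslope.const_mul 2)
      positivity
    apply hq.congr
    intro v
    rw [mul_div_assoc' 2 (P v) (1 - v), div_div_eq_mul_div, div_mul_eq_mul_div]
  -- continuity of the integrand
  have hcont : ContinuousOn (fun v => σ2 v / (2 * P v)) (Ico (1/2:ℝ) 1) := by
    have hsub : Ico (1/2:ℝ) 1 ⊆ Icc 0 1 := fun x hx => ⟨le_trans (by norm_num) hx.1, hx.2.le⟩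
    apply ContinuousOn.div (hσc.mono hsub) (continuousOn_const.mul (hPc.mono hsub))
    intro v hv
    have := hE1 v ⟨by linarith [hv.1], hv.2⟩
    exact mul_ne_zero two_ne_zero (ne_of_gt this)
  rw [hLval]
  have := aux_tendsto (fun v => σ2 v / (2 * P v)) (σ2 1 / (2 * (mg γ - γ 1)))
    (by positivity) hcont hlim
  exact this
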